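/- (Perron-type lemma) Let r ≤ s be positive integers, and let c₁,…,c_s be positive real numbers such that c₁,…,c_r form a basis of the ℚ-vector space spanned by c₁,…,c_s. Then there exists A ∈ GL_s(ℤ) such that all entries of A⁻¹ are nonnegative, Σ_j A_{ij} c_j > 0 for i = 1,…,r, and Σ_j A_{ij} c_j = 0 for i = r+1,…,s. -/

import Mathlib

open Finset

lemma clear_denoms {ι : Type*} [Fintype ι] (f : ι → ℚ) :
    ∃ N : ℕ, 0 < N ∧ ∀ i, ∃ z : ℤ, (z : ℚ) = N * f i := by
  refine ⟨∏ j, (f j).den, Finset.prod_pos (fun j _ => (f j).den_pos), fun i => ?_⟩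
  have hd : ((f i).den : ℤ) ∣ (∏ j, ((f j).den : ℕ) : ℤ) := by
    exact_mod_cast Int.natCast_dvd_natCast.mpr (Finset.dvd_prod_of_mem (fun j => (f j).den) (Finset.mem_univ i))
  obtain ⟨k, hk⟩ := hd
  refine ⟨(f i).num * k, ?_⟩
  have hden : ((f i).den : ℚ) ≠ 0 := by exact_mod_cast (f i).den_pos.ne'
  have h1 : ((∏ j, ((f j).den : ℕ) : ℤ) : ℚ) = ((f i).den : ℚ) * (k : ℚ) := by
    exact_mod_cast congrArg (fun z : ℤ => (z : ℚ)) hk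
  have h4 : f i * ((f i).den : ℚ) = ((f i).num : ℚ) := Rat.mul_den_eq_num _
  push_cast at h1 ⊢
  rw [h1]
  linear_combination (-(k:ℚ)) * h4

lemma rank_aux {r s : ℕ} (hrs : r ≤ s) (c : Fin s → ℝ)
    (hindep : LinearIndependent ℚ (fun i : Fin r => c (Fin.castLE hrs i)))
    (z : Fin r → Fin s → ℤ) (lam : Fin r → ℝ) (i₀ : Fin r) (h0 : lam i₀ = 0)
    (hc : ∀ j, c j = ∑ i, (z i j : ℝ) * lam i) : False := by
  classical
  set W : Submodule ℚ ℝ := Submodule.span ℚ (Set.range (fun i : {i : Fin r // lam i ≠ 0} => lam i.1)) with hW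
  have hmem : ∀ j, c j ∈ W := by
    intro j
    rw [hc j]
    refine Submodule.sum_mem _ (fun i _ => ?_)
    by_cases h : lam i = 0
    · simp [h]
    · have : ((z i j : ℚ)) • lam i ∈ W := by
        refine Submodule.smul_mem _ _ (Submodule.subset_span ?_)
        exact ⟨⟨i, h⟩, rfl⟩
      simpa [Rat.smul_def] using this
  have hfin : FiniteDimensional ℚ W := FiniteDimensional.span_of_finite ℚ (Set.finite_range _)
  have hli : LinearIndependent ℚ (fun i : Fin r => (⟨c (Fin.castLE hrs i), hmem _⟩ : W)) := by
    apply LinearIndependent.of_comp W.subtype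
    exact hindep
  have h1 : r ≤ Module.finrank ℚ W := by
    simpa using hli.fintype_card_le_finrank
  have h2 : Module.finrank ℚ W ≤ Fintype.card {i : Fin r // lam i ≠ 0} := by
    have := finrank_span_le_card (R := ℚ) (Set.range (fun i : {i : Fin r // lam i ≠ 0} => lam i.1))
    refine le_trans this ?_
    rw [Set.toFinset_range]
    exact le_trans (Finset.card_image_le) (by simp)
  have h3 : Fintype.card {i : Fin r // lam i ≠ 0} < r := by
    haveI := Classical.decPred (fun i : Fin r => lam i ≠ 0)
    have : ¬ (lam i₀ ≠ 0) := fun h => h h0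
    simpa using Fintype.card_subtype_lt (p := fun i => lam i ≠ 0) (x := i₀) this
  omega

lemma det_ne_zero_aux {r s : ℕ} (hrs : r ≤ s) (c : Fin s → ℝ)
    (hindep : LinearIndependent ℚ (fun i : Fin r => c (Fin.castLE hrs i)))
    (Q : Matrix (Fin s) (Fin r) ℚ)
    (v : Fin r → Fin s → ℤ) (lam : Fin r → ℝ)
    (hv : ∀ i j, (v i j : ℚ) = ∑ i', Q j i' * (v i (Fin.castLE hrs i') : ℚ))
    (hc : ∀ j, c j = ∑ i, (v i j : ℝ) * lam i) :
    (Matrix.of fun i' i : Fin r => (v i (Fin.castLE hrs i') : ℚ)).det ≠ 0 := by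
  intro h
  obtain ⟨α, hα0, hαv⟩ := Matrix.exists_mulVec_eq_zero_iff.mpr h
  have hrow : ∀ i', ∑ i, (v i (Fin.castLE hrs i') : ℚ) * α i = 0 := by
    intro i'
    have := congrFun hαv i'
    simpa [Matrix.mulVec, dotProduct] using this
  have hfull : ∀ j, ∑ i, α i * (v i j : ℚ) = 0 := by
    intro j
    calc ∑ i, α i * (v i j : ℚ)
        = ∑ i, α i * ∑ i', Q j i' * (v i (Fin.castLE hrs i') : ℚ) := by
          refine Finset.sum_congr rfl fun i _ => by rw [hv i j]
      _ = ∑ i', Q j i' * ∑ i, (v i (Fin.castLE hrs i') : ℚ) * α i := by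
          simp_rw [Finset.mul_sum]
          rw [Finset.sum_comm]
          refine Finset.sum_congr rfl fun i' _ => Finset.sum_congr rfl fun i _ => by ring
      _ = 0 := by simp [hrow]
  obtain ⟨i₀, hi₀⟩ := Function.ne_iff.mp hα0
  set t : ℝ := lam i₀ / ((α i₀ : ℝ)) with ht
  have hα₀R : ((α i₀ : ℝ)) ≠ 0 := by exact_mod_cast hi₀
  refine rank_aux hrs c hindep v (fun i => lam i - t * (α i : ℝ)) i₀ ?_ ?_
  · rw [ht]; field_simp; ring
  · intro j
    have hfR : ∑ i, (α i : ℝ) * (v i j : ℝ) = 0 := by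
      have := hfull j
      have := congrArg (fun q : ℚ => (q : ℝ)) this
      push_cast at this
      simpa using this
    have : ∑ i, (v i j : ℝ) * (lam i - t * (α i : ℝ))
        = ∑ i, (v i j : ℝ) * lam i - t * ∑ i, (α i : ℝ) * (v i j : ℝ) := by
      rw [Finset.mul_sum, ← Finset.sum_sub_distrib]
      refine Finset.sum_congr rfl fun i _ => by ring
    rw [this, hfR, hc j]
    ring

lemma descent {r s : ℕ} (hrs : r ≤ s) (c : Fin s → ℝ)
    (hindep : LinearIndependent ℚ (fun i : Fin r => c (Fin.castLE hrs i)))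
    (Q : Matrix (Fin s) (Fin r) ℚ) (m : ℕ) :
    ∀ (v : Fin r → Fin s → ℤ) (lam : Fin r → ℝ),
    (∀ i j, (v i j : ℚ) = ∑ i', Q j i' * (v i (Fin.castLE hrs i') : ℚ)) →
    (∀ i j, 0 ≤ v i j) → (∀ i, 0 < lam i) →
    (∀ j, c j = ∑ i, (v i j : ℝ) * lam i) →
    (Matrix.of fun i' i : Fin r => v i (Fin.castLE hrs i')).det.natAbs ≤ m →
    ∃ (v' : Fin r → Fin s → ℤ) (lam' : Fin r → ℝ),
      (∀ i j, (v' i j : ℚ) = ∑ i', Q j i' * (v' i (Fin.castLE hrs i') : ℚ)) ∧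
      (∀ i j, 0 ≤ v' i j) ∧ (∀ i, 0 < lam' i) ∧
      (∀ j, c j = ∑ i, (v' i j : ℝ) * lam' i) ∧
      (∀ x : Fin s → ℤ, (∀ j, (x j : ℚ) = ∑ i', Q j i' * (x (Fin.castLE hrs i') : ℚ)) →
        ∃ g : Fin r → ℤ, ∀ j, x j = ∑ i, g i * v' i j) := by
  induction m with
  | zero =>
    intro v lam hv hnn hlam hc hfuel
    exfalso
    have hdQ := det_ne_zero_aux hrs c hindep Q v lam hv hc
    have hZ : (Matrix.of fun i' i : Fin r => v i (Fin.castLE hrs i')).det = 0 := by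
      omega
    apply hdQ
    have : ((Matrix.of fun i' i : Fin r => v i (Fin.castLE hrs i')).det : ℚ) = 0 := by
      exact_mod_cast congrArg (fun z : ℤ => (z : ℚ)) hZ
    rw [← this]
    exact (RingHom.map_det (Int.castRingHom ℚ) (Matrix.of fun i' i : Fin r => v i (Fin.castLE hrs i'))).symm
  | succ m ih =>
    intro v lam hv hnn hlam hc hfuel
    classical
    by_cases hterm : ∀ x : Fin s → ℤ,
        (∀ j, (x j : ℚ) = ∑ i', Q j i' * (x (Fin.castLE hrs i') : ℚ)) →
        ∃ g : Fin r → ℤ, ∀ j, x j = ∑ i, g i * v i j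
    · exact ⟨v, lam, hv, hnn, hlam, hc, hterm⟩
    push_neg at hterm
    obtain ⟨w, hwL, hwng⟩ := hterm
    set YQ : Matrix (Fin r) (Fin r) ℚ :=
      Matrix.of fun i' i : Fin r => (v i (Fin.castLE hrs i') : ℚ) with hYQ
    have hdQ : YQ.det ≠ 0 := det_ne_zero_aux hrs c hindep Q v lam hv hc
    have hdu : IsUnit YQ.det := isUnit_iff_ne_zero.mpr hdQ
    set μ : Fin r → ℚ := YQ⁻¹.mulVec (fun i' => (w (Fin.castLE hrs i') : ℚ)) with hμdef
    have hμ : ∀ i', ∑ i, (v i (Fin.castLE hrs i') : ℚ) * μ i = w (Fin.castLE hrs i') := by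
      intro i'
      have h1 : YQ.mulVec μ = (fun i' => (w (Fin.castLE hrs i') : ℚ)) := by
        rw [hμdef, Matrix.mulVec_mulVec, Matrix.mul_nonsing_inv _ hdu, Matrix.one_mulVec]
      have := congrFun h1 i'
      simpa [Matrix.mulVec, dotProduct, hYQ] using this
    have hwfull : ∀ j, (w j : ℚ) = ∑ i, μ i * (v i j : ℚ) := by
      intro j
      calc (w j : ℚ) = ∑ i', Q j i' * (w (Fin.castLE hrs i') : ℚ) := hwL j
        _ = ∑ i', Q j i' * ∑ i, (v i (Fin.castLE hrs i') : ℚ) * μ i := by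
            refine Finset.sum_congr rfl fun i' _ => by rw [hμ i']
        _ = ∑ i, μ i * (v i j : ℚ) := by
            simp_rw [Finset.mul_sum]
            rw [Finset.sum_comm]
            refine Finset.sum_congr rfl fun i _ => ?_
            rw [hv i j, Finset.mul_sum]
            refine Finset.sum_congr rfl fun i' _ => by ring
    set μ' : Fin r → ℚ := fun i => Int.fract (μ i) with hμ'def
    set w' : Fin s → ℤ := fun j => w j - ∑ i, ⌊μ i⌋ * v i j with hw'def
    have hw'Q : ∀ j, (w' j : ℚ) = ∑ i, μ' i * (v i j : ℚ) := by
      intro j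
      have : (w' j : ℚ) = (w j : ℚ) - ∑ i, (⌊μ i⌋ : ℚ) * (v i j : ℚ) := by
        rw [hw'def]; push_cast; ring
      rw [this, hwfull j, ← Finset.sum_sub_distrib]
      refine Finset.sum_congr rfl fun i _ => ?_
      have hfr : μ' i = μ i - (⌊μ i⌋ : ℚ) := rfl
      rw [hfr]; ring
    have hw'nn : ∀ j, 0 ≤ w' j := by
      intro j
      have : (0 : ℚ) ≤ (w' j : ℚ) := by
        rw [hw'Q j]
        refine Finset.sum_nonneg fun i _ => mul_nonneg (Int.fract_nonneg _) ?_
        exact_mod_cast hnn i j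
      exact_mod_cast this
    have hw'L : ∀ j, (w' j : ℚ) = ∑ i', Q j i' * (w' (Fin.castLE hrs i') : ℚ) := by
      intro j
      calc (w' j : ℚ) = ∑ i, μ' i * (v i j : ℚ) := hw'Q j
        _ = ∑ i, μ' i * ∑ i', Q j i' * (v i (Fin.castLE hrs i') : ℚ) := by
            refine Finset.sum_congr rfl fun i _ => by rw [hv i j]
        _ = ∑ i', Q j i' * (w' (Fin.castLE hrs i') : ℚ) := by
            simp_rw [Finset.mul_sum]
            rw [Finset.sum_comm]
            refine Finset.sum_congr rfl fun i' _ => ?_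
            rw [hw'Q (Fin.castLE hrs i'), Finset.mul_sum]
            refine Finset.sum_congr rfl fun i _ => by ring
    have hS : ∃ i, μ' i ≠ 0 := by
      by_contra hall
      push_neg at hall
      obtain ⟨j, hj⟩ := hwng (fun i => ⌊μ i⌋)
      apply hj
      have hcast : (w j : ℚ) = ((∑ i, ⌊μ i⌋ * v i j : ℤ) : ℚ) := by
        rw [hwfull j]
        push_cast
        refine Finset.sum_congr rfl fun i _ => ?_
        have h2 : μ i - (⌊μ i⌋ : ℚ) = 0 := hall i
        have h0 : μ i = (⌊μ i⌋ : ℚ) := by linarith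
        rw [← h0]
      exact_mod_cast hcast
    obtain ⟨iw, hiw⟩ := hS
    have hne : (Finset.univ.filter (fun i => μ' i ≠ 0)).Nonempty := ⟨iw, by simp [hiw]⟩
    obtain ⟨istar, histar, hmin⟩ :=
      Finset.exists_min_image _ (fun i => lam i / ((μ' i : ℝ))) hne
    have histar' : μ' istar ≠ 0 := (Finset.mem_filter.mp histar).2
    have hμ'star : 0 < μ' istar := lt_of_le_of_ne (Int.fract_nonneg _) (Ne.symm histar')
    have hμ'starR : (0:ℝ) < ((μ' istar : ℝ)) := by exact_mod_cast hμ'star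
    set t : ℝ := lam istar / ((μ' istar : ℝ)) with htdef
    have ht0 : 0 < t := div_pos (hlam istar) hμ'starR
    have htt : t * ((μ' istar : ℝ)) = lam istar := div_mul_cancel₀ _ (ne_of_gt hμ'starR)
    set lam'' : Fin r → ℝ := fun i => if i = istar then t else lam i - t * ((μ' i : ℝ)) with hlam''def
    set v'' : Fin r → Fin s → ℤ := Function.update v istar w' with hv''def
    have hv''i : ∀ i, i ≠ istar → v'' i = v i := fun i h => Function.update_of_ne h _ _
    have hv''s : v'' istar = w' := Function.update_self _ _ _
    have hlamstar : lam'' istar = t := by simp [hlam''def]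
    have hlamne : ∀ i, i ≠ istar → lam'' i = lam i - t * ((μ' i : ℝ)) := by
      intro i h
      simp only [hlam''def]
      rw [if_neg h]
    have hw'R : ∀ j, (w' j : ℝ) = ∑ i, ((μ' i : ℝ)) * (v i j : ℝ) := by
      intro j
      have h1 := congrArg (fun q : ℚ => (q:ℝ)) (hw'Q j)
      push_cast at h1
      simpa using h1
    have hsplit : ∀ f : Fin r → ℝ, ∑ i, f i = ∑ i ∈ Finset.univ.erase istar, f i + f istar :=
      fun f => (Finset.sum_erase_add _ _ (Finset.mem_univ _)).symm
    have hc'' : ∀ j, c j = ∑ i, (v'' i j : ℝ) * lam'' i := by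
      intro j
      rw [hc j, hsplit (fun i => (v i j : ℝ) * lam i), hsplit (fun i => (v'' i j : ℝ) * lam'' i)]
      have hA : ∑ i ∈ Finset.univ.erase istar, (v'' i j : ℝ) * lam'' i
          = (∑ i ∈ Finset.univ.erase istar, (v i j : ℝ) * lam i)
            - t * ∑ i ∈ Finset.univ.erase istar, ((μ' i : ℝ)) * (v i j : ℝ) := by
        rw [Finset.mul_sum, ← Finset.sum_sub_distrib]
        refine Finset.sum_congr rfl fun i hi => ?_
        have hine : i ≠ istar := (Finset.mem_erase.mp hi).1
        rw [hv''i i hine, hlamne i hine]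
        ring
      have hstar : (v'' istar j : ℝ) * lam'' istar
          = t * ((∑ i ∈ Finset.univ.erase istar, ((μ' i : ℝ)) * (v i j : ℝ))
                 + ((μ' istar : ℝ)) * (v istar j : ℝ)) := by
        rw [hv''s, hlamstar, hw'R j, hsplit (fun i => ((μ' i : ℝ)) * (v i j : ℝ))]
        ring
      rw [hA, hstar]
      linear_combination (-((v istar j : ℝ))) * htt
    have hv''L : ∀ i j, (v'' i j : ℚ) = ∑ i', Q j i' * (v'' i (Fin.castLE hrs i') : ℚ) := by
      intro i j
      rcases eq_or_ne i istar with h | h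
      · subst h; rw [hv''s]; exact hw'L j
      · rw [hv''i i h]; exact hv i j
    have hnn'' : ∀ i j, 0 ≤ v'' i j := by
      intro i j
      rcases eq_or_ne i istar with h | h
      · subst h; rw [hv''s]; exact hw'nn j
      · rw [hv''i i h]; exact hnn i j
    have hpos'' : ∀ i, 0 < lam'' i := by
      intro i
      rcases eq_or_ne i istar with h | h
      · subst h; rw [hlamstar]; exact ht0
      · rw [hlamne i h]
        by_cases hμ0 : μ' i = 0
        · have : ((μ' i : ℝ)) = 0 := by exact_mod_cast hμ0
          rw [this]; simpa using hlam i
        · have hμpos : (0:ℝ) < ((μ' i : ℝ)) := by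
            exact_mod_cast lt_of_le_of_ne (Int.fract_nonneg _) (Ne.symm hμ0)
          have hle : t ≤ lam i / ((μ' i : ℝ)) := hmin i (Finset.mem_filter.mpr ⟨Finset.mem_univ _, hμ0⟩)
          have hge : 0 ≤ lam i - t * ((μ' i : ℝ)) := by
            rw [le_div_iff₀ hμpos] at hle
            linarith
          rcases lt_or_eq_of_le hge with h1 | h1
          · exact h1
          · exfalso
            refine rank_aux hrs c hindep v'' lam'' i ?_ hc''
            rw [hlamne i h]; linarith
    -- determinant decrease
    set YQ2 : Matrix (Fin r) (Fin r) ℚ :=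
      Matrix.of fun i' i : Fin r => (v'' i (Fin.castLE hrs i') : ℚ) with hYQ2
    have hupd : YQ2 = YQ.updateCol istar (fun k => ∑ i, μ' i • YQ k i) := by
      ext i' i
      rw [Matrix.updateCol_apply]
      rcases eq_or_ne i istar with h | h
      · rw [if_pos h, h]
        show (v'' istar (Fin.castLE hrs i') : ℚ) = _
        rw [hv''s, hw'Q (Fin.castLE hrs i')]
        refine Finset.sum_congr rfl fun i _ => ?_
        rw [smul_eq_mul]
        rfl
      · simp only [if_neg h]
        show (v'' i (Fin.castLE hrs i') : ℚ) = _
        rw [hv''i i h]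
        rfl
    have hdet2 : YQ2.det = μ' istar * YQ.det := by
      rw [hupd, Matrix.det_updateCol_sum YQ istar μ']
      rw [smul_eq_mul]
    have hcastdet : ∀ u : Fin r → Fin s → ℤ,
        (((Matrix.of fun i' i : Fin r => u i (Fin.castLE hrs i')).det : ℤ) : ℚ)
          = (Matrix.of fun i' i : Fin r => (u i (Fin.castLE hrs i') : ℚ)).det := by
      intro u
      exact RingHom.map_det (Int.castRingHom ℚ) (Matrix.of fun i' i : Fin r => u i (Fin.castLE hrs i'))
    have hZne : (Matrix.of fun i' i : Fin r => v i (Fin.castLE hrs i')).det ≠ 0 := by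
      intro h0
      apply hdQ
      have := hcastdet v
      rw [h0] at this
      simpa [hYQ] using this.symm
    have hlt : (Matrix.of fun i' i : Fin r => v'' i (Fin.castLE hrs i')).det.natAbs
        < (Matrix.of fun i' i : Fin r => v i (Fin.castLE hrs i')).det.natAbs := by
      set dZ2 := (Matrix.of fun i' i : Fin r => v'' i (Fin.castLE hrs i')).det with hdZ2
      set dZ := (Matrix.of fun i' i : Fin r => v i (Fin.castLE hrs i')).det with hdZ
      have habs : |(dZ2 : ℚ)| < |(dZ : ℚ)| := by
        have e2 : ((dZ2 : ℤ) : ℚ) = YQ2.det := hcastdet v''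
        have e1 : ((dZ : ℤ) : ℚ) = YQ.det := hcastdet v
        rw [e2, e1, hdet2, abs_mul, abs_of_nonneg (Int.fract_nonneg (μ istar))]
        have h1 : |YQ.det| > 0 := abs_pos.mpr hdQ
        have h2 : μ' istar < 1 := Int.fract_lt_one _
        nlinarith
      have : ((dZ2.natAbs : ℤ) : ℚ) < ((dZ.natAbs : ℤ) : ℚ) := by
        rw [Int.natCast_natAbs, Int.natCast_natAbs]
        push_cast
        simpa using habs
      exact_mod_cast this
    exact ih v'' lam'' hv''L hnn'' hpos'' hc'' (by omega)

set_option maxHeartbeats 2000000 in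
lemma init_aux {r s : ℕ} (hr : 0 < r) (hrs : r ≤ s) (c : Fin s → ℝ)
    (hpos : ∀ j, 0 < c j)
    (Q : Matrix (Fin s) (Fin r) ℚ)
    (hQtop : ∀ (i : Fin r) (i' : Fin r), Q (Fin.castLE hrs i) i' = if i = i' then 1 else 0)
    (hQc : ∀ j, c j = ∑ i, (Q j i : ℝ) * c (Fin.castLE hrs i)) :
    ∃ (v : Fin r → Fin s → ℤ) (lam : Fin r → ℝ),
      (∀ i j, (v i j : ℚ) = ∑ i', Q j i' * (v i (Fin.castLE hrs i') : ℚ)) ∧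
      (∀ i j, 0 ≤ v i j) ∧ (∀ i, 0 < lam i) ∧
      (∀ j, c j = ∑ i, (v i j : ℝ) * lam i) := by
  classical
  haveI : NeZero r := ⟨hr.ne'⟩
  haveI : NeZero s := ⟨(lt_of_lt_of_le hr hrs).ne'⟩
  obtain ⟨D, hD, hbex⟩ := clear_denoms (fun p : Fin s × Fin r => Q p.1 p.2)
  choose bz hbz using hbex
  set bI : Fin r → Fin s → ℤ := fun i j => bz (j, i) with hbIdef
  have hbQ : ∀ i j, (bI i j : ℚ) = D * Q j i := fun i j => hbz (j, i)
  have hbR : ∀ i j, (bI i j : ℝ) = D * (Q j i : ℝ) := by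
    intro i j
    have := congrArg (fun q : ℚ => (q : ℝ)) (hbQ i j)
    push_cast at this
    simpa using this
  have hDR : (0:ℝ) < D := by exact_mod_cast hD
  set t : Fin r → ℝ := fun i => c (Fin.castLE hrs i) / D with htdef
  have htpos : ∀ i, 0 < t i := fun i => div_pos (hpos _) hDR
  have hct : ∀ j, c j = ∑ i, (bI i j : ℝ) * t i := by
    intro j
    rw [hQc j]
    refine Finset.sum_congr rfl fun i _ => ?_
    rw [hbR i j, htdef]
    field_simp
  -- bound M
  set M : ℝ := ∑ i : Fin r, ∑ j : Fin s, |(bI i j : ℝ)| with hMdef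
  have hM0 : 0 ≤ M := Finset.sum_nonneg fun i _ => Finset.sum_nonneg fun j _ => abs_nonneg _
  have hMrow : ∀ j, ∑ k : Fin r, |(bI k j : ℝ)| ≤ M := by
    intro j
    refine Finset.sum_le_sum fun k _ => ?_
    exact Finset.single_le_sum (f := fun j' => |(bI k j' : ℝ)|) (fun j' _ => abs_nonneg _) (Finset.mem_univ j)
  have hMb : ∀ i j, |(bI i j : ℝ)| ≤ M := by
    intro i j
    refine le_trans ?_ (hMrow j)
    exact Finset.single_le_sum (f := fun k => |(bI k j : ℝ)|) (fun k _ => abs_nonneg _) (Finset.mem_univ i)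
  -- c min
  set cm : ℝ := Finset.univ.inf' Finset.univ_nonempty c with hcmdef
  have hcm : 0 < cm := by
    rw [hcmdef, Finset.lt_inf'_iff]
    exact fun j _ => hpos j
  have hcmle : ∀ j, cm ≤ c j := fun j => Finset.inf'_le _ (Finset.mem_univ j)
  set tm : ℝ := Finset.univ.inf' Finset.univ_nonempty t with htmdef
  have htm : 0 < tm := by
    rw [htmdef, Finset.lt_inf'_iff]
    exact fun i _ => htpos i
  have htmle : ∀ i, tm ≤ t i := fun i => Finset.inf'_le _ (Finset.mem_univ i)
  set U : ℝ := min ((cm/2)/(M+1)) tm with hUdef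
  have hU : 0 < U := lt_min (div_pos (by linarith) (by linarith)) htm
  obtain ⟨σ, hσ1, hσ2⟩ := exists_rat_btwn hU
  have hσpos : 0 < σ := by exact_mod_cast hσ1
  have hσR : (0:ℝ) < (σ : ℝ) := hσ1
  set ε : ℚ := σ / (r+1) with hεdef
  have hεpos : 0 < ε := by
    rw [hεdef]
    positivity
  have hεσQ : (r : ℚ) * ε < σ := by
    rw [hεdef]
    rw [div_eq_mul_inv]
    rw [← mul_assoc]
    have h1 : (0:ℚ) < (r:ℚ) + 1 := by positivity
    rw [mul_comm (r:ℚ) σ, mul_assoc]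
    have h2 : (r:ℚ) * ((r:ℚ)+1)⁻¹ < 1 := by
      rw [mul_inv_lt_iff₀ h1]
      linarith
    nlinarith [hσpos]
  have hεσ : (r : ℝ) * (ε:ℝ) < (σ:ℝ) := by exact_mod_cast hεσQ
  have hεR : (0:ℝ) < (ε:ℝ) := by exact_mod_cast hεpos
  have hεltσ : (ε:ℝ) < (σ:ℝ) := by
    have hr1 : (1:ℝ) ≤ (r:ℝ) := by exact_mod_cast hr
    nlinarith [hεσ, hεR]
  -- choose ρ
  have hρex : ∀ i : Fin r, ∃ q : ℚ, t i - (ε:ℝ) < (q:ℝ) ∧ (q:ℝ) < t i := by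
    intro i
    exact exists_rat_btwn (by linarith [htpos i])
  choose ρ hρ1 hρ2 using hρex
  have hρpos : ∀ i, 0 < ρ i := by
    intro i
    have h1 : (0:ℝ) < (ρ i : ℝ) := by
      have h2 : (ε:ℝ) < tm := lt_of_lt_of_le hεltσ (le_trans (le_of_lt hσ2) (min_le_right _ _))
      have := hρ1 i
      have := htmle i
      linarith
    exact_mod_cast h1
  set u : Fin s → ℚ := fun j => ∑ k, ρ k * (bI k j : ℚ) with hudef
  have huR : ∀ j, (u j : ℝ) = ∑ k, (ρ k : ℝ) * (bI k j : ℝ) := by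
    intro j
    rw [hudef]
    push_cast
    rfl
  have hσM : (σ:ℝ) * (M + 1) ≤ cm / 2 := by
    have h1 : (σ:ℝ) ≤ (cm/2)/(M+1) := le_trans (le_of_lt hσ2) (min_le_left _ _)
    rw [div_eq_mul_inv] at h1
    have h2 : (0:ℝ) < M + 1 := by linarith
    calc (σ:ℝ) * (M+1) ≤ (cm/2) * (M+1)⁻¹ * (M+1) := by
          exact mul_le_mul_of_nonneg_right h1 (le_of_lt h2)
      _ = cm/2 := by rw [mul_assoc, inv_mul_cancel₀ h2.ne', mul_one]
  have hu_low : ∀ j, cm / 2 ≤ (u j : ℝ) := by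
    intro j
    have hdiff : c j - (u j : ℝ) = ∑ k, (t k - (ρ k : ℝ)) * (bI k j : ℝ) := by
      rw [hct j, huR j, ← Finset.sum_sub_distrib]
      exact Finset.sum_congr rfl fun k _ => by ring
    have habs : c j - (u j : ℝ) ≤ (ε:ℝ) * M := by
      rw [hdiff]
      calc ∑ k, (t k - (ρ k : ℝ)) * (bI k j : ℝ)
          ≤ ∑ k, (ε:ℝ) * |(bI k j : ℝ)| := by
            refine Finset.sum_le_sum fun k _ => ?_
            have h1 : t k - (ρ k : ℝ) ≤ (ε:ℝ) := by linarith [hρ1 k]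
            have h2 : (0:ℝ) ≤ t k - (ρ k:ℝ) := by linarith [hρ2 k]
            calc (t k - (ρ k : ℝ)) * (bI k j : ℝ) ≤ (t k - (ρ k:ℝ)) * |(bI k j : ℝ)| := by
                  exact mul_le_mul_of_nonneg_left (le_abs_self _) h2
              _ ≤ (ε:ℝ) * |(bI k j : ℝ)| := mul_le_mul_of_nonneg_right h1 (abs_nonneg _)
        _ = (ε:ℝ) * ∑ k, |(bI k j : ℝ)| := by rw [Finset.mul_sum]
        _ ≤ (ε:ℝ) * M := mul_le_mul_of_nonneg_left (hMrow j) (le_of_lt hεR)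
    have hεM : (ε:ℝ) * M ≤ cm / 2 := by
      have : (ε:ℝ) * M ≤ (σ:ℝ) * (M+1) := by nlinarith
      linarith
    have := hcmle j
    linarith
  set vq : Fin r → Fin s → ℚ := fun i j => u j + σ * (bI i j : ℚ) with hvqdef
  have hvqR : ∀ i j, (vq i j : ℝ) = (u j : ℝ) + (σ:ℝ) * (bI i j : ℝ) := by
    intro i j
    rw [hvqdef]
    push_cast
    rfl
  have hvq_nonneg : ∀ i j, 0 ≤ vq i j := by
    intro i j
    have h1 : (0:ℝ) ≤ (vq i j : ℝ) := by
      rw [hvqR i j]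
      have h2 : (σ:ℝ) * (bI i j : ℝ) ≥ -((σ:ℝ) * M) := by
        have := hMb i j
        have h3 : -(M:ℝ) ≤ (bI i j:ℝ) := by
          have := abs_le.mp (le_refl |(bI i j : ℝ)|)
          have h4 := neg_abs_le ((bI i j : ℝ))
          linarith [hMb i j]
        nlinarith [hσR]
      have h5 : (σ:ℝ) * M ≤ cm/2 := by nlinarith [hσR]
      have := hu_low j
      linarith
    exact_mod_cast h1
  -- lattice property of bI and u and vq
  have hbtop : ∀ (k : Fin r) (i' : Fin r), (bI k (Fin.castLE hrs i') : ℚ) = D * (if i' = k then 1 else 0) := by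
    intro k i'
    rw [hbQ k (Fin.castLE hrs i'), hQtop i' k]
  have hbΛ : ∀ i j, (bI i j : ℚ) = ∑ i', Q j i' * (bI i (Fin.castLE hrs i') : ℚ) := by
    intro i j
    have : ∀ i', Q j i' * (bI i (Fin.castLE hrs i') : ℚ) = if i' = i then Q j i' * D else 0 := by
      intro i'
      rw [hbtop i i']
      by_cases h : i' = i
      · rw [if_pos h, if_pos h]; ring
      · rw [if_neg h, if_neg h]; ring
    rw [Finset.sum_congr rfl fun i' _ => this i']
    rw [Finset.sum_ite_eq' Finset.univ i (fun i' => Q j i' * D)]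
    rw [if_pos (Finset.mem_univ i), hbQ i j]
    ring
  have huΛ : ∀ j, u j = ∑ i', Q j i' * u (Fin.castLE hrs i') := by
    intro j
    rw [hudef]
    simp only
    calc ∑ k, ρ k * (bI k j : ℚ)
        = ∑ k, ρ k * ∑ i', Q j i' * (bI k (Fin.castLE hrs i') : ℚ) := by
          exact Finset.sum_congr rfl fun k _ => by rw [← hbΛ k j]
      _ = ∑ i', Q j i' * ∑ k, ρ k * (bI k (Fin.castLE hrs i') : ℚ) := by
          simp_rw [Finset.mul_sum]
          rw [Finset.sum_comm]
          exact Finset.sum_congr rfl fun i' _ => Finset.sum_congr rfl fun k _ => by ring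
  have hvqΛ : ∀ i j, vq i j = ∑ i', Q j i' * vq i (Fin.castLE hrs i') := by
    intro i j
    rw [hvqdef]
    simp only
    calc u j + σ * (bI i j : ℚ)
        = ∑ i', Q j i' * u (Fin.castLE hrs i') + σ * ∑ i', Q j i' * (bI i (Fin.castLE hrs i') : ℚ) := by
          rw [← huΛ j, ← hbΛ i j]
      _ = ∑ i', Q j i' * (u (Fin.castLE hrs i') + σ * (bI i (Fin.castLE hrs i') : ℚ)) := by
          rw [Finset.mul_sum, ← Finset.sum_add_distrib]
          exact Finset.sum_congr rfl fun i' _ => by ring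
  -- T and lam0
  set den : ℝ := (σ:ℝ) + ∑ i, (ρ i : ℝ) with hdendef
  have hden : 0 < den := by
    rw [hdendef]
    have : (0:ℝ) ≤ ∑ i, (ρ i : ℝ) := Finset.sum_nonneg fun i _ => by
      have := hρpos i
      positivity
    linarith
  set T : ℝ := (∑ i, t i) / den with hTdef
  have hT : T * den = ∑ i, t i := div_mul_cancel₀ _ hden.ne'
  set lam0 : Fin r → ℝ := fun i => (t i - T * (ρ i : ℝ)) / (σ:ℝ) with hlam0def
  have hsiglam : ∀ i, (σ:ℝ) * lam0 i = t i - T * (ρ i : ℝ) := by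
    intro i
    rw [hlam0def]
    field_simp
  have hnum : ∀ i, (∑ k, t k) * (ρ i : ℝ) < t i * den := by
    intro i
    have key : ∀ k, (ρ i : ℝ) * t k < t i * (ρ k : ℝ) + (ε:ℝ) * t i := by
      intro k
      have h1 : (ρ i : ℝ) < t i := hρ2 i
      have h2 : t k - (ε:ℝ) < (ρ k : ℝ) := hρ1 k
      have h3 := mul_lt_mul_of_pos_right h1 (htpos k)
      have h4 := mul_lt_mul_of_pos_left h2 (htpos i)
      have h5 : t i * (t k - (ε:ℝ)) = t i * t k - (ε:ℝ) * t i := by ring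
      rw [h5] at h4
      linarith
    have hsum : ∑ k, (ρ i : ℝ) * t k < ∑ k, (t i * (ρ k : ℝ) + (ε:ℝ) * t i) := by
      refine Finset.sum_lt_sum_of_nonempty Finset.univ_nonempty fun k _ => key k
    have h3 : ∑ k, (ρ i:ℝ) * t k = (ρ i:ℝ) * ∑ k, t k := by rw [Finset.mul_sum]
    have h4 : ∑ k, (t i * (ρ k : ℝ) + (ε:ℝ) * t i) = t i * (∑ k, (ρ k:ℝ)) + (r:ℝ) * (ε:ℝ) * t i := by
      rw [Finset.sum_add_distrib, ← Finset.mul_sum]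
      simp [Finset.card_univ, mul_comm]
      ring
    rw [h3, h4] at hsum
    have h5 : (r:ℝ) * (ε:ℝ) * t i < (σ:ℝ) * t i := by
      exact mul_lt_mul_of_pos_right hεσ (htpos i)
    rw [hdendef]
    have h6 : t i * ((σ:ℝ) + ∑ k, (ρ k:ℝ)) = t i * (σ:ℝ) + t i * ∑ k, (ρ k:ℝ) := by ring
    have h7 : t i * (σ:ℝ) = (σ:ℝ) * t i := mul_comm _ _
    have h8 : (∑ k, t k) * (ρ i:ℝ) = (ρ i:ℝ) * ∑ k, t k := mul_comm _ _
    have h9 : t i * ∑ k, (ρ k:ℝ) = (∑ k, (ρ k:ℝ)) * t i := mul_comm _ _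
    have h10 : t i * (∑ k, (ρ k:ℝ)) + (r:ℝ) * (ε:ℝ) * t i = t i * ∑ k, (ρ k:ℝ) + (r:ℝ) * (ε:ℝ) * t i := rfl
    linarith [hsum, h5, h6, h7, h8, h9]
  have hlam0pos : ∀ i, 0 < lam0 i := by
    intro i
    rw [hlam0def]
    refine div_pos ?_ hσR
    have h1 : T * (ρ i : ℝ) * den < t i * den := by
      calc T * (ρ i : ℝ) * den = (ρ i : ℝ) * (T * den) := by ring
        _ = (ρ i : ℝ) * ∑ k, t k := by rw [hT]
        _ = (∑ k, t k) * (ρ i : ℝ) := by ring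
        _ < t i * den := hnum i
    have := (mul_lt_mul_iff_of_pos_right hden).mp h1
    linarith
  have hsumlam : ∑ i, lam0 i = T := by
    have h1 : (σ:ℝ) * ∑ i, lam0 i = (σ:ℝ) * T := by
      rw [Finset.mul_sum]
      calc ∑ i, (σ:ℝ) * lam0 i = ∑ i, (t i - T * (ρ i:ℝ)) := Finset.sum_congr rfl fun i _ => hsiglam i
        _ = (∑ i, t i) - T * ∑ i, (ρ i : ℝ) := by rw [Finset.sum_sub_distrib, Finset.mul_sum]
        _ = T * den - T * ∑ i, (ρ i : ℝ) := by rw [hT]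
        _ = (σ:ℝ) * T := by rw [hdendef]; ring
    exact mul_left_cancel₀ hσR.ne' h1
  have hc0 : ∀ j, c j = ∑ i, (vq i j : ℝ) * lam0 i := by
    intro j
    have hlb : (σ:ℝ) * ∑ i, (bI i j : ℝ) * lam0 i = c j - T * (u j : ℝ) := by
      rw [Finset.mul_sum]
      calc ∑ i, (σ:ℝ) * ((bI i j : ℝ) * lam0 i)
          = ∑ i, (bI i j : ℝ) * ((σ:ℝ) * lam0 i) := Finset.sum_congr rfl fun i _ => by ring
        _ = ∑ i, (bI i j : ℝ) * (t i - T * (ρ i : ℝ)) := Finset.sum_congr rfl fun i _ => by rw [hsiglam i]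
        _ = ∑ i, ((bI i j : ℝ) * t i - T * ((ρ i:ℝ) * (bI i j : ℝ))) :=
            Finset.sum_congr rfl fun i _ => by ring
        _ = (∑ i, (bI i j:ℝ) * t i) - T * ∑ i, (ρ i:ℝ) * (bI i j : ℝ) := by
            rw [Finset.sum_sub_distrib, ← Finset.mul_sum]
        _ = c j - T * (u j : ℝ) := by rw [← hct j, ← huR j]
    calc c j = (u j : ℝ) * T + (c j - T * (u j : ℝ)) := by ring
      _ = (u j : ℝ) * (∑ i, lam0 i) + (σ:ℝ) * ∑ i, (bI i j : ℝ) * lam0 i := by rw [hsumlam, hlb]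
      _ = ∑ i, ((u j : ℝ) * lam0 i) + ∑ i, (σ:ℝ) * ((bI i j : ℝ) * lam0 i) := by
          rw [Finset.mul_sum, Finset.mul_sum]
      _ = ∑ i, (vq i j : ℝ) * lam0 i := by
          rw [← Finset.sum_add_distrib]
          refine Finset.sum_congr rfl fun i _ => ?_
          rw [hvqR i j]
          ring
  -- clear denominators of vq
  obtain ⟨K, hK, hvex⟩ := clear_denoms (fun p : Fin r × Fin s => vq p.1 p.2)
  choose vz hvz using hvex
  refine ⟨fun i j => vz (i, j), fun i => lam0 i / K, ?_, ?_, ?_, ?_⟩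
  · intro i j
    have h1 : (vz (i, j) : ℚ) = K * vq i j := hvz (i, j)
    rw [h1, hvqΛ i j, Finset.mul_sum]
    refine Finset.sum_congr rfl fun i' _ => ?_
    rw [hvz (i, Fin.castLE hrs i')]
    ring
  · intro i j
    have h1 : (0:ℚ) ≤ (vz (i,j) : ℚ) := by
      rw [hvz (i,j)]
      have h2 := hvq_nonneg i j
      have h3 : (0:ℚ) ≤ (K:ℚ) := by exact_mod_cast le_of_lt hK
      exact mul_nonneg h3 h2
    exact_mod_cast h1
  · intro i
    have hKR : (0:ℝ) < (K:ℝ) := by exact_mod_cast hK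
    exact div_pos (hlam0pos i) hKR
  · intro j
    have hKR : (0:ℝ) < (K:ℝ) := by exact_mod_cast hK
    rw [hc0 j]
    refine Finset.sum_congr rfl fun i _ => ?_
    have h1 : ((vz (i,j) : ℤ) : ℝ) = (K:ℝ) * (vq i j : ℝ) := by
      have := congrArg (fun q : ℚ => (q:ℝ)) (hvz (i,j))
      push_cast at this
      simpa using this
    rw [h1]
    field_simp

set_option maxHeartbeats 8000000 in
lemma assemble {r s : ℕ} (hr : 0 < r) (hrs : r ≤ s) (c : Fin s → ℝ)
    (hpos : ∀ j, 0 < c j)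
    (hindep : LinearIndependent ℚ (fun i : Fin r => c (Fin.castLE hrs i)))
    (Q : Matrix (Fin s) (Fin r) ℚ)
    (v : Fin r → Fin s → ℤ) (lam : Fin r → ℝ)
    (hv : ∀ i j, (v i j : ℚ) = ∑ i', Q j i' * (v i (Fin.castLE hrs i') : ℚ))
    (hnn : ∀ i j, 0 ≤ v i j) (hlam : ∀ i, 0 < lam i)
    (hc : ∀ j, c j = ∑ i, (v i j : ℝ) * lam i)
    (hterm : ∀ x : Fin s → ℤ, (∀ j, (x j : ℚ) = ∑ i', Q j i' * (x (Fin.castLE hrs i') : ℚ)) →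
        ∃ g : Fin r → ℤ, ∀ j, x j = ∑ i, g i * v i j) :
    ∃ A : Matrix (Fin s) (Fin s) ℤ, IsUnit A.det ∧
      (∀ i j, 0 ≤ A⁻¹ i j) ∧
      (∀ i : Fin s, (i : ℕ) < r → 0 < ∑ j, (A i j : ℝ) * c j) ∧
      (∀ i : Fin s, r ≤ (i : ℕ) → ∑ j, (A i j : ℝ) * c j = 0) := by
  classical
  -- the saturated lattice
  set Λsub : Submodule ℤ (Fin s → ℤ) :=
    { carrier := {x | ∀ j, (x j : ℚ) = ∑ i', Q j i' * (x (Fin.castLE hrs i') : ℚ)}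
      add_mem' := by
        intro a b ha hb j
        simp only [Set.mem_setOf_eq] at ha hb ⊢
        simp only [Pi.add_apply]
        push_cast
        rw [ha j, hb j, ← Finset.sum_add_distrib]
        exact Finset.sum_congr rfl fun i' _ => by ring
      zero_mem' := by
        intro j
        simp
      smul_mem' := by
        intro z x hx j
        simp only [Set.mem_setOf_eq] at hx ⊢
        simp only [Pi.smul_apply, smul_eq_mul]
        push_cast
        rw [hx j, Finset.mul_sum]
        exact Finset.sum_congr rfl fun i' _ => by ring } with hΛdef
  have hmemiff : ∀ x : Fin s → ℤ,
      x ∈ Λsub ↔ ∀ j, (x j : ℚ) = ∑ i', Q j i' * (x (Fin.castLE hrs i') : ℚ) := fun x => Iff.rfl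
  have hvΛ : ∀ i, v i ∈ Λsub := fun i => (hmemiff (v i)).mpr (hv i)
  -- quotient is finite, torsion-free, hence free
  haveI hNZ : NoZeroSMulDivisors ℤ ((Fin s → ℤ) ⧸ Λsub) := by
    refine ⟨fun {z m} hzm => ?_⟩
    by_cases hz : z = 0
    · exact Or.inl hz
    right
    obtain ⟨x, rfl⟩ := Submodule.Quotient.mk_surjective Λsub m
    rw [Submodule.Quotient.mk_eq_zero]
    have hmem : z • x ∈ Λsub := by
      rw [← Submodule.Quotient.mk_eq_zero, Submodule.Quotient.mk_smul]
      exact hzm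
    rw [hmemiff] at hmem ⊢
    intro j
    have hj := hmem j
    have hz' : (z:ℚ) ≠ 0 := Int.cast_ne_zero.mpr hz
    apply mul_left_cancel₀ hz'
    have h1 : ((z • x) j : ℚ) = (z:ℚ) * (x j : ℚ) := by
      simp only [Pi.smul_apply, smul_eq_mul]
      push_cast
      ring
    rw [← h1, hj, Finset.mul_sum]
    refine Finset.sum_congr rfl fun i' _ => ?_
    have h2 : ((z • x) (Fin.castLE hrs i') : ℚ) = (z:ℚ) * (x (Fin.castLE hrs i') : ℚ) := by
      simp only [Pi.smul_apply, smul_eq_mul]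
      push_cast
      ring
    rw [h2]
    ring
  haveI hfree : Module.Free ℤ ((Fin s → ℤ) ⧸ Λsub) := Module.free_of_finite_type_torsion_free'
  set κ := Module.Free.ChooseBasisIndex ℤ ((Fin s → ℤ) ⧸ Λsub) with hκdef
  set bM : Module.Basis κ ℤ ((Fin s → ℤ) ⧸ Λsub) := Module.Free.chooseBasis _ _ with hbMdef
  have hpre : ∀ k : κ, ∃ x : Fin s → ℤ, Λsub.mkQ x = bM k := fun k => Submodule.mkQ_surjective _ _
  choose lift hlift using hpre
  set σ : ((Fin s → ℤ) ⧸ Λsub) →ₗ[ℤ] (Fin s → ℤ) := Module.Basis.constr bM ℤ lift with hσdef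
  have hσsec : ∀ m, Λsub.mkQ (σ m) = m := by
    have h1 : Λsub.mkQ.comp σ = LinearMap.id := by
      refine Module.Basis.ext bM fun k => ?_
      rw [LinearMap.comp_apply, LinearMap.id_apply, hσdef, Module.Basis.constr_basis]
      exact hlift k
    intro m
    have := congrArg (fun f => f m) (congrArg (fun f => f.toFun) h1)
    simpa using this
  -- injectivity of integer combinations of v
  have hdQ := det_ne_zero_aux hrs c hindep Q v lam hv hc
  have hvinj : ∀ g : Fin r → ℤ, (∀ j, ∑ i, g i * v i j = 0) → ∀ i, g i = 0 := by
    intro g hg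
    set YQ : Matrix (Fin r) (Fin r) ℚ :=
      Matrix.of fun i' i : Fin r => (v i (Fin.castLE hrs i') : ℚ) with hYQdef
    have hY : YQ.mulVec (fun i => (g i : ℚ)) = 0 := by
      funext i'
      have h1 := congrArg (fun z : ℤ => (z : ℚ)) (hg (Fin.castLE hrs i'))
      push_cast at h1
      simp only [Matrix.mulVec, dotProduct, hYQdef, Matrix.of_apply, Pi.zero_apply]
      rw [← h1]
      exact Finset.sum_congr rfl fun i _ => by ring
    have h2 : (fun i => (g i : ℚ)) = 0 := by
      have h3 := congrArg (fun w => YQ⁻¹.mulVec w) hY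
      simp only [Matrix.mulVec_mulVec, Matrix.nonsing_inv_mul _ (isUnit_iff_ne_zero.mpr hdQ),
        Matrix.one_mulVec, Matrix.mulVec_zero] at h3
      exact h3
    intro i
    have h4 := congrFun h2 i
    rw [Pi.zero_apply] at h4
    exact_mod_cast h4
  -- the combined family
  set F : (Fin r ⊕ κ) → (Fin s → ℤ) := Sum.elim v (fun k => lift k) with hFdef
  have hFinl : ∀ i, F (Sum.inl i) = v i := fun i => rfl
  have hFinr : ∀ k, F (Sum.inr k) = lift k := fun k => rfl
  have hliF : LinearIndependent ℤ F := by
    rw [Fintype.linearIndependent_iff]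
    intro g hg
    have hg' : ∑ x : Fin r ⊕ κ, g x • Λsub.mkQ (F x) = 0 := by
      have := congrArg Λsub.mkQ hg
      rw [map_sum] at this
      simp only [map_smul] at this
      simpa using this
    rw [Fintype.sum_sum_type] at hg'
    have hkerv : ∀ i, Λsub.mkQ (F (Sum.inl i)) = 0 := by
      intro i
      rw [hFinl]
      rw [Submodule.mkQ_apply, Submodule.Quotient.mk_eq_zero]
      exact hvΛ i
    have hbMk : ∀ k, Λsub.mkQ (F (Sum.inr k)) = bM k := fun k => hlift k
    have hA0 : ∑ i : Fin r, g (Sum.inl i) • Λsub.mkQ (F (Sum.inl i)) = 0 :=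
      Finset.sum_eq_zero fun i _ => by rw [hkerv i, smul_zero]
    have hB2 : ∑ k : κ, g (Sum.inr k) • Λsub.mkQ (F (Sum.inr k)) = ∑ k, g (Sum.inr k) • bM k :=
      Finset.sum_congr rfl fun k _ => by rw [hbMk k]
    rw [hA0, hB2, zero_add] at hg'
    have hinr0 : ∀ k, g (Sum.inr k) = 0 :=
      Fintype.linearIndependent_iff.mp bM.linearIndependent _ hg'
    have hinl : ∑ i : Fin r, g (Sum.inl i) • v i = 0 := by
      have h5 := hg
      rw [Fintype.sum_sum_type] at h5
      have h6 : ∑ k : κ, g (Sum.inr k) • F (Sum.inr k) = 0 :=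
        Finset.sum_eq_zero fun k _ => by rw [hinr0 k, zero_smul]
      rw [h6, add_zero] at h5
      exact h5
    have hinl0 : ∀ i, g (Sum.inl i) = 0 := by
      refine hvinj _ fun j => ?_
      have := congrFun hinl j
      rw [Finset.sum_apply] at this
      simpa [Pi.smul_apply, smul_eq_mul] using this
    intro x
    cases x with
    | inl i => exact hinl0 i
    | inr k => exact hinr0 k
  have hspF : ⊤ ≤ Submodule.span ℤ (Set.range F) := by
    intro x _
    have hker : x - σ (Λsub.mkQ x) ∈ Λsub := by
      have h1 : Λsub.mkQ (x - σ (Λsub.mkQ x)) = 0 := by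
        rw [map_sub, hσsec]
        simp
      rwa [← LinearMap.mem_ker, Submodule.ker_mkQ] at h1
    obtain ⟨g, hg⟩ := hterm (x - σ (Λsub.mkQ x)) ((hmemiff _).mp hker)
    have hx1 : x - σ (Λsub.mkQ x) = ∑ i, g i • v i := by
      funext j
      rw [Finset.sum_apply]
      simpa [Pi.smul_apply, smul_eq_mul] using hg j
    have hx2 : σ (Λsub.mkQ x) = ∑ k, (bM.repr (Λsub.mkQ x)) k • σ (bM k) := by
      conv_lhs => rw [← Module.Basis.sum_repr bM (Λsub.mkQ x)]
      rw [map_sum]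
      exact Finset.sum_congr rfl fun k _ => by rw [map_smul]
    have hx3 : x = (∑ i, g i • v i) + ∑ k, (bM.repr (Λsub.mkQ x)) k • σ (bM k) := by
      rw [← hx1, ← hx2]
      ring
    rw [hx3]
    refine Submodule.add_mem _ ?_ ?_
    · refine Submodule.sum_mem _ fun i _ => Submodule.smul_mem _ _ ?_
      apply Submodule.subset_span
      exact ⟨Sum.inl i, rfl⟩
    · refine Submodule.sum_mem _ fun k _ => Submodule.smul_mem _ _ ?_
      have : σ (bM k) = F (Sum.inr k) := by
        rw [hσdef, Module.Basis.constr_basis, hFinr]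
      rw [this]
      apply Submodule.subset_span
      exact ⟨Sum.inr k, rfl⟩
  set Bas : Module.Basis (Fin r ⊕ κ) ℤ (Fin s → ℤ) := Module.Basis.mk hliF hspF with hBasdef
  set e0 : Module.Basis (Fin s) ℤ (Fin s → ℤ) := Pi.basisFun ℤ (Fin s) with he0def
  have hcard : Fintype.card (Fin r ⊕ κ) = s := by
    have e := Bas.indexEquiv e0
    have := Fintype.card_congr e
    simpa using this
  have hκcard : Fintype.card κ = s - r := by
    rw [Fintype.card_sum, Fintype.card_fin] at hcard
    omega
  set eκ : κ ≃ Fin (s - r) := Fintype.equivFinOfCardEq hκcard with heκdef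
  -- the index equivalence
  have hι2 : ∀ k : κ, r + (eκ k : ℕ) < s := by
    intro k
    have := (eκ k).2
    omega
  set ιE : Fin s ≃ (Fin r ⊕ κ) :=
    { toFun := fun j => if h : (j : ℕ) < r then Sum.inl ⟨j, h⟩
        else Sum.inr (eκ.symm ⟨(j:ℕ) - r, by omega⟩)
      invFun := Sum.elim (fun i => Fin.castLE hrs i) (fun k => ⟨r + (eκ k : ℕ), hι2 k⟩)
      left_inv := by
        intro j
        by_cases h : (j : ℕ) < r
        · simp only [dif_pos h]
          exact Fin.ext rfl
        · simp only [dif_neg h]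
          simp only [Sum.elim_inr]
          apply Fin.ext
          simp only [Equiv.apply_symm_apply]
          omega
      right_inv := by
        intro x
        cases x with
        | inl i =>
          have h : ((Fin.castLE hrs i : Fin s) : ℕ) < r := i.2
          simp only [Sum.elim_inl, dif_pos h]
          simp
        | inr k =>
          have h : ¬ ((⟨r + (eκ k : ℕ), hι2 k⟩ : Fin s) : ℕ) < r := by simp
          dsimp only [Sum.elim_inr]; rw [dif_neg h]
          congr 1
          rw [Equiv.symm_apply_eq]
          apply Fin.ext
          simp } with hιEdef
  have hιElt : ∀ (a : Fin s) (h : (a : ℕ) < r), ιE a = Sum.inl ⟨a, h⟩ := by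
    intro a h
    rw [hιEdef]
    simp only [Equiv.coe_fn_mk]
    rw [dif_pos h]
  set Bfin : Module.Basis (Fin s) ℤ (Fin s → ℤ) := Bas.reindex ιE.symm with hBfindef
  have hBfin : ∀ j, Bfin j = F (ιE j) := by
    intro j
    rw [hBfindef, Module.Basis.reindex_apply, Equiv.symm_symm, hBasdef, Module.Basis.mk_apply]
  set Bmat : Matrix (Fin s) (Fin s) ℤ := e0.toMatrix ⇑Bfin with hBmatdef
  have hBmat : ∀ j k, Bmat j k = F (ιE k) j := by
    intro j k
    rw [hBmatdef, Module.Basis.toMatrix_apply, he0def, Pi.basisFun_repr, hBfin k]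
  have hBdet : IsUnit Bmat.det := by
    refine IsUnit.of_mul_eq_one (Bfin.toMatrix ⇑e0).det ?_
    rw [← Matrix.det_mul, Module.Basis.toMatrix_mul_toMatrix_flip, Matrix.det_one]
  have hBv : ∀ (j : Fin s) (a : Fin s) (h : (a : ℕ) < r), Bmat j a = v ⟨a, h⟩ j := by
    intro j a h
    rw [hBmat j a, hιElt a h]
    rfl
  -- positive entry in each row
  have hvpos : ∀ j, ∃ i, 0 < v i j := by
    intro j
    by_contra h
    push_neg at h
    have hz : ∀ i, v i j = 0 := fun i => le_antisymm (h i) (hnn i j)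
    have : c j = 0 := by
      rw [hc j]
      refine Finset.sum_eq_zero fun i _ => by rw [hz i]; simp
    exact absurd this (hpos j).ne'
  -- column fixing
  set Mk : Fin s → ℤ := fun k => ∑ j, ((Bmat j k).natAbs : ℤ) with hMkdef
  have hMk0 : ∀ k, 0 ≤ Mk k := fun k => Finset.sum_nonneg fun j _ => by positivity
  have hMkb : ∀ j k, -(Mk k) ≤ Bmat j k := by
    intro j k
    have h1 : ((Bmat j k).natAbs : ℤ) ≤ Mk k :=
      Finset.single_le_sum (f := fun j' => ((Bmat j' k).natAbs : ℤ))
        (fun j' _ => by positivity) (Finset.mem_univ j)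
    have h2 : -((Bmat j k).natAbs : ℤ) ≤ Bmat j k := by
      rw [← Int.abs_eq_natAbs]
      exact neg_abs_le _
    omega
  set zB : Fin s → ℤ := fun j => ∑ a ∈ Finset.univ.filter (fun a : Fin s => (a:ℕ) < r), Bmat j a
    with hzBdef
  have hzB1 : ∀ j, 1 ≤ zB j := by
    intro j
    obtain ⟨i, hi⟩ := hvpos j
    have hmem : (Fin.castLE hrs i : Fin s) ∈ Finset.univ.filter (fun a : Fin s => (a:ℕ) < r) := by
      simp only [Finset.mem_filter, Finset.mem_univ, true_and]
      exact i.2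
    have hval : Bmat j (Fin.castLE hrs i) = v i j := by
      rw [hBv j (Fin.castLE hrs i) i.2]
      congr 1
    have h1 : Bmat j (Fin.castLE hrs i) ≤ zB j := by
      refine Finset.single_le_sum (f := fun a => Bmat j a) ?_ hmem
      intro a ha
      have h2 := (Finset.mem_filter.mp ha).2
      show 0 ≤ Bmat j a
      rw [hBv j a h2]
      exact hnn _ j
    omega
  set U : Matrix (Fin s) (Fin s) ℤ := fun a k =>
    (if a = k then 1 else 0) + (if (a:ℕ) < r ∧ r ≤ (k:ℕ) then Mk k else 0) with hUdef
  have hUtri : U.BlockTriangular id := by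
    intro a k h
    have h2 : (k : ℕ) < (a : ℕ) := h
    show (if a = k then 1 else 0) + (if (a:ℕ) < r ∧ r ≤ (k:ℕ) then Mk k else 0) = 0
    rw [if_neg (by intro hak; rw [hak] at h2; omega), if_neg (by intro hc2; omega)]
    norm_num
  have hUdet : U.det = 1 := by
    rw [Matrix.det_of_upperTriangular hUtri]
    refine Finset.prod_eq_one fun k _ => ?_
    show (if k = k then 1 else 0) + (if (k:ℕ) < r ∧ r ≤ (k:ℕ) then Mk k else 0) = 1
    rw [if_pos rfl, if_neg (by omega)]
    norm_num
  set B' : Matrix (Fin s) (Fin s) ℤ := Bmat * U with hB'def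
  have hB'det : IsUnit B'.det := by
    rw [hB'def, Matrix.det_mul, hUdet, mul_one]
    exact hBdet
  have hB'lt : ∀ (j k : Fin s), (k : ℕ) < r → B' j k = Bmat j k := by
    intro j k hk
    rw [hB'def, Matrix.mul_apply]
    have h1 : ∀ a, Bmat j a * U a k = (if a = k then Bmat j a else 0) := by
      intro a
      show Bmat j a * ((if a = k then 1 else 0) + (if (a:ℕ) < r ∧ r ≤ (k:ℕ) then Mk k else 0)) = _
      have hno2 : ¬((k:ℕ) < r ∧ r ≤ (k:ℕ)) := fun hcon => by omega
      have hno : ¬((a:ℕ) < r ∧ r ≤ (k:ℕ)) := fun hcon => by omega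
      by_cases h : a = k
      · simp [h, hno2]
      · simp [h, hno]
    rw [Finset.sum_congr rfl fun a _ => h1 a, Finset.sum_ite_eq' Finset.univ k (fun a => Bmat j a),
      if_pos (Finset.mem_univ k)]
  have hB'ge : ∀ (j k : Fin s), r ≤ (k : ℕ) → B' j k = Bmat j k + Mk k * zB j := by
    intro j k hk
    rw [hB'def, Matrix.mul_apply]
    have h1 : ∀ a, Bmat j a * U a k
        = (if a = k then Bmat j a else 0) + (if (a:ℕ) < r then Bmat j a * Mk k else 0) := by
      intro a
      show Bmat j a * ((if a = k then 1 else 0) + (if (a:ℕ) < r ∧ r ≤ (k:ℕ) then Mk k else 0)) = _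
      by_cases h : a = k
      · have h3 : ¬ ((k:ℕ) < r) := by omega
        simp [h, h3]
      · by_cases h2 : (a:ℕ) < r
        · simp [h, h2, hk]
        · simp [h, h2]
    rw [Finset.sum_congr rfl fun a _ => h1 a, Finset.sum_add_distrib,
      Finset.sum_ite_eq' Finset.univ k (fun a => Bmat j a), if_pos (Finset.mem_univ k)]
    congr 1
    rw [← Finset.sum_filter, ← Finset.sum_mul]
    rw [hzBdef]
    ring
  have hB'nn : ∀ (j k : Fin s), 0 ≤ B' j k := by
    intro j k
    by_cases hk : (k:ℕ) < r
    · rw [hB'lt j k hk, hBv j k hk]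
      exact hnn _ j
    · rw [hB'ge j k (by omega)]
      have h1 := hzB1 j
      have h2 := hMk0 k
      have h3 := hMkb j k
      nlinarith
  -- the vector d
  set d : Fin s → ℝ := fun k => if h : (k:ℕ) < r then lam ⟨k, h⟩ else 0 with hddef
  have hcB : ∀ j, c j = ∑ k, (B' j k : ℝ) * d k := by
    intro j
    rw [hc j]
    have h1 : ∑ k, (B' j k : ℝ) * d k
        = ∑ k ∈ Finset.univ.filter (fun k : Fin s => (k:ℕ) < r), (B' j k : ℝ) * d k := by
      symm
      refine Finset.sum_filter_of_ne fun k _ hne => ?_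
      by_contra hk
      apply hne
      have : d k = 0 := by rw [hddef]; exact dif_neg hk
      rw [this, mul_zero]
    rw [h1]
    refine Finset.sum_nbij' (fun i : Fin r => (Fin.castLE hrs i : Fin s))
      (fun k : Fin s => if h : (k:ℕ) < r then (⟨k, h⟩ : Fin r) else ⟨0, hr⟩) ?_ ?_ ?_ ?_ ?_
    · intro i _
      simp only [Finset.mem_filter, Finset.mem_univ, true_and]
      exact i.2
    · intro a _
      exact Finset.mem_univ _
    · intro i _
      have h2 : ((Fin.castLE hrs i : Fin s) : ℕ) < r := i.2
      simp only [dif_pos h2]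
      rfl
    · intro a ha
      have h2 := (Finset.mem_filter.mp ha).2
      simp only [dif_pos h2]
      exact Fin.ext rfl
    · intro i _
      have h2 : ((Fin.castLE hrs i : Fin s) : ℕ) < r := i.2
      rw [hB'lt _ _ h2, hBv _ _ h2]
      have h3 : d (Fin.castLE hrs i) = lam i := by
        rw [hddef]
        simp only [dif_pos h2]
        rfl
      rw [h3]
      exact congrArg (fun x => (x:ℝ) * lam i) rfl
  -- the inverse matrix
  set A : Matrix (Fin s) (Fin s) ℤ := B'⁻¹ with hAdef
  have hAinv : A⁻¹ = B' := by
    rw [hAdef]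
    exact Matrix.nonsing_inv_nonsing_inv B' hB'det
  have hAdetu : IsUnit A.det := by
    rw [hAdef]
    exact Matrix.isUnit_nonsing_inv_det B' hB'det
  have hABone : A * B' = 1 := by
    rw [hAdef]
    exact Matrix.nonsing_inv_mul B' hB'det
  -- real computation
  have hmul : ∀ k, ∑ j, (A k j : ℝ) * c j = d k := by
    have hcvec : (B'.map (fun z : ℤ => (z:ℝ))).mulVec d = c := by
      funext j
      rw [Matrix.mulVec]
      show (∑ k, (B'.map (fun z : ℤ => (z:ℝ))) j k * d k) = c j
      rw [hcB j]
      exact Finset.sum_congr rfl fun k _ => rfl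
    have hABR : (A.map (fun z : ℤ => (z:ℝ))) * (B'.map (fun z : ℤ => (z:ℝ))) = 1 := by
      have h1 : (A * B').map ⇑(Int.castRingHom ℝ)
          = A.map ⇑(Int.castRingHom ℝ) * B'.map ⇑(Int.castRingHom ℝ) := Matrix.map_mul
      rw [hABone] at h1
      have h2 : (1 : Matrix (Fin s) (Fin s) ℤ).map ⇑(Int.castRingHom ℝ) = 1 :=
        Matrix.map_one _ (by simp) (by simp)
      rw [h2] at h1
      exact h1.symm
    intro k
    have h3 : (A.map (fun z : ℤ => (z:ℝ))).mulVec c = d := by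
      rw [← hcvec, Matrix.mulVec_mulVec, hABR, Matrix.one_mulVec]
    have h4 := congrFun h3 k
    rw [Matrix.mulVec] at h4
    rw [← h4]
    exact Finset.sum_congr rfl fun j _ => rfl
  refine ⟨A, hAdetu, ?_, ?_, ?_⟩
  · intro i j
    rw [hAinv]
    exact hB'nn i j
  · intro i hi
    rw [hmul i, hddef]
    simp only [dif_pos hi]
    exact hlam _
  · intro i hi
    rw [hmul i, hddef]
    simp only [dif_neg (by omega : ¬ (i:ℕ) < r)]

set_option maxHeartbeats 1000000 in
open Matrix in
/-- **Perron-type lemma.**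
Let `r ≤ s` be positive integers, and let `c₁, …, c_s` be positive real numbers such
that `c₁, …, c_r` form a basis of the `ℚ`-vector space spanned by `c₁, …, c_s`
(inside `ℝ` viewed as a `ℚ`-vector space).  Then there exists a matrix
`A ∈ GL_s(ℤ)` (an integer matrix with determinant a unit, i.e. `±1`) such that all
entries of `A⁻¹` are nonnegative, `∑ j, A i j * c j > 0` for `i = 1, …, r`
(i.e. for indices `i` with `(i : ℕ) < r`), and `∑ j, A i j * c j = 0` for
`i = r+1, …, s`. -/
theorem perron_lemma (r s : ℕ) (hr : 0 < r) (hrs : r ≤ s) (c : Fin s → ℝ)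
    (hpos : ∀ j, 0 < c j)
    (hindep : LinearIndependent ℚ (fun i : Fin r => c (Fin.castLE hrs i)))
    (hspan : ∀ j : Fin s,
      c j ∈ Submodule.span ℚ (Set.range (fun i : Fin r => c (Fin.castLE hrs i)))) :
    ∃ A : Matrix (Fin s) (Fin s) ℤ, IsUnit A.det ∧
      (∀ i j, 0 ≤ A⁻¹ i j) ∧
      (∀ i : Fin s, (i : ℕ) < r → 0 < ∑ j, (A i j : ℝ) * c j) ∧
      (∀ i : Fin s, r ≤ (i : ℕ) → ∑ j, (A i j : ℝ) * c j = 0) := by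
  classical
  have hrep : ∀ j, ∃ y : Fin r → ℚ, ∑ i, y i • c (Fin.castLE hrs i) = c j :=
    fun j => (Submodule.mem_span_range_iff_exists_fun ℚ).mp (hspan j)
  choose Y hY using hrep
  set Q : Matrix (Fin s) (Fin r) ℚ := Matrix.of Y with hQdef
  have hQc : ∀ j, c j = ∑ i, (Q j i : ℝ) * c (Fin.castLE hrs i) := by
    intro j
    rw [← hY j]
    refine Finset.sum_congr rfl fun i _ => ?_
    rw [Rat.smul_def]
    rfl
  have hQtop : ∀ (i i' : Fin r), Q (Fin.castLE hrs i) i' = if i = i' then 1 else 0 := by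
    intro i i'
    have h1 : ∑ i'' : Fin r,
        (Y (Fin.castLE hrs i) i'' - (if i = i'' then 1 else 0)) • c (Fin.castLE hrs i'') = 0 := by
      have h2 : ∑ i'' : Fin r, (if i = i'' then (1:ℚ) else 0) • c (Fin.castLE hrs i'')
          = c (Fin.castLE hrs i) := by
        rw [Finset.sum_congr rfl (fun i'' _ => by
          rw [ite_smul, one_smul, zero_smul])]
        rw [Finset.sum_ite_eq Finset.univ i (fun i'' => c (Fin.castLE hrs i''))]
        rw [if_pos (Finset.mem_univ i)]
      have h3 : ∑ i'' : Fin r,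
          (Y (Fin.castLE hrs i) i'' - (if i = i'' then 1 else 0)) • c (Fin.castLE hrs i'')
          = (∑ i'' : Fin r, Y (Fin.castLE hrs i) i'' • c (Fin.castLE hrs i''))
            - ∑ i'' : Fin r, (if i = i'' then (1:ℚ) else 0) • c (Fin.castLE hrs i'') := by
        rw [← Finset.sum_sub_distrib]
        exact Finset.sum_congr rfl fun i'' _ => by rw [sub_smul]
      rw [h3, h2, hY (Fin.castLE hrs i)]
      ring
    have h2 := Fintype.linearIndependent_iff.mp hindep _ h1 i'
    have h3 : Q (Fin.castLE hrs i) i' = Y (Fin.castLE hrs i) i' := rfl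
    rw [h3]
    have := sub_eq_zero.mp h2
    exact this
  obtain ⟨v0, lam0, hv0, hnn0, hlam0, hc0⟩ := init_aux hr hrs c hpos Q hQtop hQc
  obtain ⟨v, lam, hv, hnn, hlam, hc, hterm⟩ :=
    descent hrs c hindep Q
      ((Matrix.of fun i' i : Fin r => v0 i (Fin.castLE hrs i')).det.natAbs)
      v0 lam0 hv0 hnn0 hlam0 hc0 le_rfl
  exact assemble hr hrs c hpos hindep Q v lam hv hnn hlam hc hterm
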